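/- Suppose |E[P̂_ℓ - P]| ≤ c₁ 2^{-αℓ}, V_ℓ ≤ c₂ 2^{-βℓ}, C_ℓ ≤ c₃ 2^{γℓ} with α, c₁, c₂, c₃ > 0 and γ > β > 0. Choosing L = ⌈log₂(2c₁/ε)/α⌉ so that the bias is at most ε/2, the MLMC cost ε^{-2}(∑_{ℓ=0}^L √(C_ℓ V_ℓ))² is bounded by a constant times ε^{-2-(γ-β)/α}. -/

import Mathlib

open Finset

/-- Suppose the bias satisfies `|E[P̂_ℓ - P]| = |e ℓ| ≤ c₁ 2^(-αℓ)`, the MLMC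
variances `V ℓ ≤ c₂ 2^(-βℓ)` and costs `C ℓ ≤ c₃ 2^(γℓ)`, with `α, c₁, c₂, c₃ > 0` and
`γ > β > 0`.  Choosing `L = ⌈log₂(2c₁/ε)/α⌉` the bias at level `L` is at most `ε/2`, and the
MLMC cost `ε⁻² (∑_(ℓ=0)^L √(C ℓ V ℓ))²` is bounded by a constant (independent of `ε`) times
`ε^(-2-(γ-β)/α)`. -/
theorem mlmc_complexity_bound
    (α β γ c₁ c₂ c₃ : ℝ) (hα : 0 < α) (hβ : 0 < β) (hβγ : β < γ)
    (hc₁ : 0 < c₁) (hc₂ : 0 < c₂) (hc₃ : 0 < c₃) :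
    ∃ c₄ > 0, ∀ ε : ℝ, 0 < ε → ε ≤ 1 →
      ∀ e V C : ℕ → ℝ,
      (∀ ℓ, |e ℓ| ≤ c₁ * (2:ℝ) ^ (-(α * ℓ))) →
      (∀ ℓ, 0 ≤ V ℓ) → (∀ ℓ, 0 ≤ C ℓ) →
      (∀ ℓ, V ℓ ≤ c₂ * (2:ℝ) ^ (-(β * ℓ))) →
      (∀ ℓ, C ℓ ≤ c₃ * (2:ℝ) ^ (γ * ℓ)) →
      let L : ℕ := ⌈Real.logb 2 (2 * c₁ / ε) / α⌉₊
      |e L| ≤ ε / 2 ∧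
      ε⁻¹ ^ 2 * (∑ ℓ ∈ Finset.range (L + 1), Real.sqrt (C ℓ * V ℓ))^2
        ≤ c₄ * ε ^ (-(2 + (γ - β) / α)) := by
  have hδ : 0 < γ - β := sub_pos.mpr hβγ
  set r : ℝ := (2:ℝ) ^ ((γ - β)/2) with hrdef
  have hr0 : (0:ℝ) < r := Real.rpow_pos_of_pos two_pos _
  have hr1 : (1:ℝ) < r := by
    rw [hrdef]
    exact Real.one_lt_rpow_iff_of_pos two_pos |>.mpr (Or.inl ⟨one_lt_two, by positivity⟩)
  have hr1' : 0 < r - 1 := sub_pos.mpr hr1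
  have hrsq : r ^ 2 = (2:ℝ) ^ (γ - β) := by
    rw [hrdef, ← Real.rpow_natCast ((2:ℝ)^((γ-β)/2)) 2, ← Real.rpow_mul (by norm_num)]
    norm_num
  set M : ℝ := (2:ℝ) ^ (γ - β) * (max 1 (2*c₁)) ^ ((γ-β)/α) with hMdef
  have hM0 : 0 < M := by
    apply mul_pos (Real.rpow_pos_of_pos two_pos _)
    exact Real.rpow_pos_of_pos (lt_of_lt_of_le one_pos (le_max_left _ _)) _
  refine ⟨c₂ * c₃ * (r / (r-1))^2 * M,
    mul_pos (mul_pos (mul_pos hc₂ hc₃) (pow_pos (div_pos hr0 hr1') 2)) hM0, ?_⟩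
  intro ε hε hε1 e V C he hV hC hVb hCb L
  have hL : L = ⌈Real.logb 2 (2 * c₁ / ε) / α⌉₊ := rfl
  -- Bias bound
  have hLge : Real.logb 2 (2 * c₁ / ε) ≤ α * L := by
    have h1 : Real.logb 2 (2*c₁/ε) / α ≤ (L:ℝ) := by rw [hL]; exact Nat.le_ceil _
    have := mul_le_mul_of_nonneg_left h1 hα.le
    calc Real.logb 2 (2*c₁/ε) = α * (Real.logb 2 (2*c₁/ε) / α) := by field_simp
      _ ≤ α * L := this
  have hbias : |e L| ≤ ε / 2 := by
    have h2 : (2:ℝ) ^ (-(α * (L:ℝ))) ≤ (2:ℝ) ^ (-Real.logb 2 (2*c₁/ε)) :=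
      Real.rpow_le_rpow_of_exponent_le one_le_two (neg_le_neg hLge)
    have h3 : (2:ℝ) ^ (-Real.logb 2 (2*c₁/ε)) = ε / (2*c₁) := by
      rw [Real.rpow_neg (by norm_num), Real.rpow_logb two_pos (by norm_num) (by positivity)]
      field_simp
    calc |e L| ≤ c₁ * (2:ℝ)^(-(α*(L:ℝ))) := he L
      _ ≤ c₁ * (ε/(2*c₁)) := by rw [← h3]; exact mul_le_mul_of_nonneg_left h2 hc₁.le
      _ = ε/2 := by field_simp
  refine ⟨hbias, ?_⟩
  -- termwise bound
  have hterm : ∀ ℓ : ℕ, Real.sqrt (C ℓ * V ℓ) ≤ Real.sqrt (c₂ * c₃) * r ^ ℓ := by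
    intro ℓ
    have h1 : C ℓ * V ℓ ≤ (c₂ * c₃) * (r ^ ℓ)^2 := by
      have hmm := mul_le_mul (hCb ℓ) (hVb ℓ) (hV ℓ) (by positivity)
      have hr2 : (2:ℝ)^(γ*(ℓ:ℝ)) * (2:ℝ)^(-(β*(ℓ:ℝ))) = (r^ℓ)^2 := by
        rw [← Real.rpow_add two_pos, ← Real.rpow_natCast r ℓ, hrdef,
            ← Real.rpow_mul (by norm_num), ← Real.rpow_natCast ((2:ℝ)^((γ-β)/2*(ℓ:ℝ))) 2,
            ← Real.rpow_mul (by norm_num)]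
        congr 1
        ring
      calc C ℓ * V ℓ ≤ (c₃ * 2^(γ*(ℓ:ℝ))) * (c₂ * 2^(-(β*(ℓ:ℝ)))) := hmm
        _ = (c₂*c₃) * ((2:ℝ)^(γ*(ℓ:ℝ)) * 2^(-(β*(ℓ:ℝ)))) := by ring
        _ = (c₂*c₃) * (r^ℓ)^2 := by rw [hr2]
    calc Real.sqrt (C ℓ * V ℓ) ≤ Real.sqrt ((c₂*c₃) * (r^ℓ)^2) := Real.sqrt_le_sqrt h1
      _ = Real.sqrt (c₂*c₃) * r^ℓ := by
          rw [Real.sqrt_mul (by positivity), Real.sqrt_sq (by positivity)]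
  -- geometric sum
  have hgeom : ∑ ℓ ∈ Finset.range (L+1), r ^ ℓ ≤ (r / (r-1)) * r ^ L := by
    rw [geom_sum_eq (ne_of_gt hr1) (L+1), div_le_iff₀ hr1']
    have hps : r ^ (L+1) = r^L * r := pow_succ r L
    have hcancel : r/(r-1) * r^L * (r-1) = r * r^L := by field_simp
    rw [hcancel]
    nlinarith [pow_pos hr0 L]
  have hS : (∑ ℓ ∈ Finset.range (L+1), Real.sqrt (C ℓ * V ℓ))
      ≤ Real.sqrt (c₂*c₃) * ((r/(r-1)) * r ^ L) := by
    calc (∑ ℓ ∈ Finset.range (L+1), Real.sqrt (C ℓ * V ℓ))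
        ≤ ∑ ℓ ∈ Finset.range (L+1), Real.sqrt (c₂*c₃) * r^ℓ :=
          Finset.sum_le_sum fun ℓ _ => hterm ℓ
      _ = Real.sqrt (c₂*c₃) * ∑ ℓ ∈ Finset.range (L+1), r^ℓ := by rw [Finset.mul_sum]
      _ ≤ _ := mul_le_mul_of_nonneg_left hgeom (Real.sqrt_nonneg _)
  have hSnn : 0 ≤ ∑ ℓ ∈ Finset.range (L+1), Real.sqrt (C ℓ * V ℓ) :=
    Finset.sum_nonneg fun _ _ => Real.sqrt_nonneg _
  have hS2 : (∑ ℓ ∈ Finset.range (L+1), Real.sqrt (C ℓ * V ℓ))^2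
      ≤ (c₂*c₃) * (r/(r-1))^2 * ((2:ℝ)^(γ-β))^L := by
    have h1 := pow_le_pow_left₀ hSnn hS 2
    have h2 : (Real.sqrt (c₂*c₃) * ((r/(r-1)) * r ^ L))^2
        = (c₂*c₃) * (r/(r-1))^2 * ((2:ℝ)^(γ-β))^L := by
      rw [mul_pow, mul_pow, Real.sq_sqrt (by positivity), ← pow_mul, mul_comm L 2, pow_mul, hrsq]
      ring
    linarith [h1, h2.le]
  -- level bound
  have hq : 0 < (γ-β)/α := div_pos hδ hα
  have hpow : ((2:ℝ)^(γ-β)) ^ L ≤ M * ε ^ (-((γ-β)/α)) := by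
    by_cases h : 1 ≤ 2 * c₁ / ε
    · have hlb : 0 ≤ Real.logb 2 (2*c₁/ε) := Real.logb_nonneg one_lt_two h
      have hx0 : 0 ≤ Real.logb 2 (2*c₁/ε) / α := by positivity
      have hLle : (L:ℝ) ≤ Real.logb 2 (2*c₁/ε) / α + 1 := by
        rw [hL]; exact (Nat.ceil_lt_add_one hx0).le
      have h1 : ((2:ℝ)^(γ-β))^L = (2:ℝ) ^ ((γ-β) * (L:ℝ)) := by
        rw [← Real.rpow_natCast ((2:ℝ)^(γ-β)) L, ← Real.rpow_mul (by norm_num)]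
      have h3 : (2:ℝ) ^ ((γ-β) * (L:ℝ)) ≤ (2:ℝ) ^ ((γ-β) * (Real.logb 2 (2*c₁/ε)/α + 1)) :=
        Real.rpow_le_rpow_of_exponent_le one_le_two
          (mul_le_mul_of_nonneg_left hLle hδ.le)
      have h4 : (2:ℝ) ^ ((γ-β) * (Real.logb 2 (2*c₁/ε)/α + 1))
          = (2:ℝ)^(γ-β) * ((2*c₁/ε) ^ ((γ-β)/α)) := by
        rw [show (γ-β)*(Real.logb 2 (2*c₁/ε)/α + 1)
              = Real.logb 2 (2*c₁/ε) * ((γ-β)/α) + (γ-β) from by field_simp,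
            Real.rpow_add two_pos, Real.rpow_mul (by norm_num),
            Real.rpow_logb two_pos (by norm_num) (by positivity), mul_comm]
      have h5 : (2*c₁/ε) ^ ((γ-β)/α) = (2*c₁)^((γ-β)/α) * ε ^ (-((γ-β)/α)) := by
        rw [Real.div_rpow (by positivity) hε.le, Real.rpow_neg hε.le, div_eq_mul_inv]
      have h6 : (2*c₁)^((γ-β)/α) ≤ (max 1 (2*c₁)) ^ ((γ-β)/α) :=
        Real.rpow_le_rpow (by positivity) (le_max_right _ _) hq.le
      calc ((2:ℝ)^(γ-β))^L = (2:ℝ) ^ ((γ-β) * (L:ℝ)) := h1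
        _ ≤ (2:ℝ) ^ ((γ-β) * (Real.logb 2 (2*c₁/ε)/α + 1)) := h3
        _ = (2:ℝ)^(γ-β) * ((2*c₁)^((γ-β)/α) * ε ^ (-((γ-β)/α))) := by rw [h4, h5]
        _ ≤ M * ε ^ (-((γ-β)/α)) := by
            rw [hMdef, mul_assoc]
            apply mul_le_mul_of_nonneg_left _ (Real.rpow_pos_of_pos two_pos _).le
            exact mul_le_mul_of_nonneg_right h6 (Real.rpow_nonneg hε.le _)
    · push_neg at h
      have hlb : Real.logb 2 (2*c₁/ε) ≤ 0 :=
        Real.logb_nonpos one_lt_two (by positivity) h.le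
      have hL0 : L = 0 := by
        rw [hL, Nat.ceil_eq_zero]
        exact div_nonpos_of_nonpos_of_nonneg hlb hα.le
      rw [hL0, pow_zero]
      have h1 : (1:ℝ) ≤ (2:ℝ)^(γ-β) := Real.one_le_rpow one_le_two hδ.le
      have h2 : (1:ℝ) ≤ (max 1 (2*c₁)) ^ ((γ-β)/α) :=
        Real.one_le_rpow (le_max_left _ _) hq.le
      have h3 : (1:ℝ) ≤ ε ^ (-((γ-β)/α)) :=
        Real.one_le_rpow_of_pos_of_le_one_of_nonpos hε hε1 (neg_nonpos.mpr hq.le)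
      nlinarith
  -- put everything together
  have hεinv : (ε⁻¹:ℝ) ^ 2 = ε ^ (-(2:ℝ)) := by
    rw [inv_pow, ← Real.rpow_natCast ε 2, ← Real.rpow_neg hε.le]
    norm_num
  have hfin : ε ^ (-(2:ℝ)) * ε ^ (-((γ-β)/α)) = ε ^ (-(2 + (γ-β)/α)) := by
    rw [← Real.rpow_add hε]; ring_nf
  have hε2 : 0 ≤ ε ^ (-(2:ℝ)) := Real.rpow_nonneg hε.le _
  have hkey : (∑ ℓ ∈ Finset.range (L+1), Real.sqrt (C ℓ * V ℓ))^2
      ≤ (c₂*c₃) * (r/(r-1))^2 * (M * ε ^ (-((γ-β)/α))) := by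
    calc (∑ ℓ ∈ Finset.range (L+1), Real.sqrt (C ℓ * V ℓ))^2
        ≤ (c₂*c₃) * (r/(r-1))^2 * ((2:ℝ)^(γ-β))^L := hS2
      _ ≤ (c₂*c₃) * (r/(r-1))^2 * (M * ε ^ (-((γ-β)/α))) :=
          mul_le_mul_of_nonneg_left hpow (by positivity)
  calc ε⁻¹ ^ 2 * (∑ ℓ ∈ Finset.range (L+1), Real.sqrt (C ℓ * V ℓ))^2
      ≤ ε ^ (-(2:ℝ)) * ((c₂*c₃) * (r/(r-1))^2 * (M * ε ^ (-((γ-β)/α)))) := by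
        rw [hεinv]; exact mul_le_mul_of_nonneg_left hkey hε2
    _ = c₂ * c₃ * (r/(r-1))^2 * M * (ε ^ (-(2:ℝ)) * ε ^ (-((γ-β)/α))) := by ring
    _ = c₂ * c₃ * (r/(r-1))^2 * M * ε ^ (-(2 + (γ-β)/α)) := by rw [hfin]
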